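/- Let φ, φ₁, φ₂, … be (normalized, right-continuous at 0) generators of Archimedean copulas. If D⁺φ_n(x) → D⁺φ(x) for all x ∈ Cont(D⁺φ), then φ_n(x) → φ(x) for all x ∈ (0,1]. -/

import Mathlib

open MeasureTheory Filter Set
open scoped ENNReal

noncomputable section

/-- Right-hand derivative (of a convex function on `[0,1]`) of `f` at `x`, realized as the
infimum of the forward difference quotients with right endpoint in `(x, 1]`. -/
noncomputable def rightD (f : ℝ → ℝ) (x : ℝ) : ℝ :=
  sInf ((fun y => (f y - f x) / (y - x)) '' Set.Ioc x 1)

/-- `φ : [0,1] → [0,∞]` is a (normalized, right-continuous at `0`) generator of an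
Archimedean copula: convex, strictly decreasing, `φ 1 = 0`, finite on `(0,1]`,
right-continuous at `0` and normalized by `φ (1/2) = 1`. -/
structure IsGenerator (φ : ℝ → ℝ≥0∞) : Prop where
  convex : ∀ x ∈ Set.Icc (0:ℝ) 1, ∀ y ∈ Set.Icc (0:ℝ) 1, ∀ t ∈ Set.Icc (0:ℝ) 1,
    φ (t * x + (1 - t) * y) ≤ ENNReal.ofReal t * φ x + ENNReal.ofReal (1 - t) * φ y
  strict_anti : ∀ x ∈ Set.Icc (0:ℝ) 1, ∀ y ∈ Set.Icc (0:ℝ) 1, x < y → φ y < φ x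
  map_one : φ 1 = 0
  finite : ∀ x ∈ Set.Ioc (0:ℝ) 1, φ x < ⊤
  rightCont_zero : Filter.Tendsto φ (nhdsWithin 0 (Set.Ioi 0)) (nhds (φ 0))
  normalized : φ (1/2) = 1

/-- Pseudo-inverse `φ⁻` of a generator: `φ⁻ s = φ⁻¹ s` for `s < φ 0` and `0` for `s ≥ φ 0`. -/
noncomputable def pseudoInv (φ : ℝ → ℝ≥0∞) (s : ℝ≥0∞) : ℝ :=
  sSup {x | x ∈ Set.Icc (0:ℝ) 1 ∧ s ≤ φ x}

/-- The Archimedean copula generated by `φ`: `C(x,y) = φ⁻(φ x + φ y)`. -/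
noncomputable def archCopula (φ : ℝ → ℝ≥0∞) (x y : ℝ) : ℝ :=
  pseudoInv φ (φ x + φ y)

/-- The right-hand derivative `D⁺φ` of a generator. -/
noncomputable def Dplus (φ : ℝ → ℝ≥0∞) (x : ℝ) : ℝ :=
  rightD (fun t => (φ t).toReal) x

/-- The set `Cont(D⁺φ)` of continuity points of `D⁺φ` in `(0,1)`. -/
def ContD (φ : ℝ → ℝ≥0∞) : Set ℝ :=
  {x | x ∈ Set.Ioo (0:ℝ) 1 ∧ ContinuousAt (Dplus φ) x}

/-- The `t`-level function `f^t(x) = φ⁻(φ t − φ x)` of the Archimedean copula generated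
by `φ`. -/
noncomputable def levelFn (φ : ℝ → ℝ≥0∞) (t x : ℝ) : ℝ :=
  pseudoInv φ (φ t - φ x)

/-- The Kendall distribution function `F^Kendall(x) = x − φ(x)/D⁺φ(x)` of the Archimedean
copula generated by `φ`. -/
noncomputable def kendall (φ : ℝ → ℝ≥0∞) (x : ℝ) : ℝ :=
  x - (φ x).toReal / Dplus φ x

/-- The Markov kernel (as conditional distribution function `(x,y) ↦ K_C(x,[0,y])`) of the
Archimedean copula generated by `φ`. -/
noncomputable def archKernel (φ : ℝ → ℝ≥0∞) (x y : ℝ) : ℝ :=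
  if x = 0 ∨ x = 1 then 1
  else if y < levelFn φ 0 x then 0
  else Dplus φ x / Dplus φ (archCopula φ x y)

/-- The metric `D₁` between two copulas, expressed via their conditional distribution
functions `K₁, K₂` (with `Kᵢ x y = K_{Cᵢ}(x,[0,y])`). -/
noncomputable def D1 (K1 K2 : ℝ → ℝ → ℝ) : ℝ :=
  ∫ y in Set.Icc (0:ℝ) 1, ∫ x in Set.Icc (0:ℝ) 1, |K1 x y - K2 x y|

/-- Conditional distribution function of the independence copula `Π`. -/
def piKernel : ℝ → ℝ → ℝ := fun _ y => y

/-- Dependence measure `ζ₁(C) = 3 D₁(C, Π)`. -/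
noncomputable def zeta1 (K : ℝ → ℝ → ℝ) : ℝ := 3 * D1 K piKernel

/-- Dependence measure `r(C) = 6 ∫∫ K_C(x,[0,y])² dλ(x) dλ(y) − 2`. -/
noncomputable def rdep (K : ℝ → ℝ → ℝ) : ℝ :=
  6 * (∫ y in Set.Icc (0:ℝ) 1, ∫ x in Set.Icc (0:ℝ) 1, (K x y) ^ 2) - 2

/-- Weak conditional convergence of a sequence of copulas, in terms of their conditional
distribution functions: for λ-a.e. `x ∈ [0,1]` the measures `K_{C_n}(x,·)` converge weakly
to `K_C(x,·)`, i.e. the conditional distribution functions converge at every continuity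
point of `y ↦ K_C(x,[0,y])` in `[0,1]`. -/
def WeakCondConv (Kseq : ℕ → ℝ → ℝ → ℝ) (K : ℝ → ℝ → ℝ) : Prop :=
  ∀ᵐ x ∂(volume.restrict (Set.Icc (0:ℝ) 1)),
    ∀ y ∈ Set.Icc (0:ℝ) 1, ContinuousWithinAt (fun t => K x t) (Set.Icc 0 1) y →
      Filter.Tendsto (fun n => Kseq n x y) Filter.atTop (nhds (K x y))

section AuxStmt3

variable {ψ : ℝ → ℝ≥0∞}

lemma IsGenerator.convexOn (hψ : IsGenerator ψ) :
    ConvexOn ℝ (Set.Ioc 0 1) (fun t => (ψ t).toReal) := by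
  refine ⟨convex_Ioc 0 1, fun x hx y hy a b ha hb hab => ?_⟩
  have hb' : b = 1 - a := by linarith
  have hx' : x ∈ Icc (0:ℝ) 1 := Ioc_subset_Icc_self hx
  have hy' : y ∈ Icc (0:ℝ) 1 := Ioc_subset_Icc_self hy
  have key := hψ.convex x hx' y hy' a ⟨ha, by linarith⟩
  have hxt : ψ x ≠ ⊤ := (hψ.finite x hx).ne
  have hyt : ψ y ≠ ⊤ := (hψ.finite y hy).ne
  have h1 : ENNReal.ofReal a * ψ x ≠ ⊤ := ENNReal.mul_ne_top ENNReal.ofReal_ne_top hxt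
  have h2 : ENNReal.ofReal (1 - a) * ψ y ≠ ⊤ := ENNReal.mul_ne_top ENNReal.ofReal_ne_top hyt
  have := ENNReal.toReal_mono (by exact ENNReal.add_ne_top.2 ⟨h1, h2⟩) key
  simp only [ENNReal.toReal_add h1 h2, ENNReal.toReal_mul, ENNReal.toReal_ofReal ha,
    ENNReal.toReal_ofReal (by linarith : (0:ℝ) ≤ 1 - a)] at this
  simpa [hb', smul_eq_mul] using this

lemma IsGenerator.antitoneOn (hψ : IsGenerator ψ) :
    AntitoneOn (fun t => (ψ t).toReal) (Set.Ioc 0 1) := by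
  intro x hx y hy hxy
  rcases eq_or_lt_of_le hxy with rfl | h
  · exact le_rfl
  · exact ENNReal.toReal_mono (hψ.finite x hx).ne
      (hψ.strict_anti x (Ioc_subset_Icc_self hx) y (Ioc_subset_Icc_self hy) h).le

lemma IsGenerator.rD_le (hψ : IsGenerator ψ) {a y : ℝ} (ha : a ∈ Ioo (0:ℝ) 1)
    (hy : y ∈ Ioc a 1) :
    Dplus ψ a ≤ ((ψ y).toReal - (ψ a).toReal) / (y - a) := by
  set f : ℝ → ℝ := fun t => (ψ t).toReal with hf
  have hbdd : BddBelow ((fun y => (f y - f a) / (y - a)) '' Set.Ioc a 1) := by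
    refine ⟨(f a - f (a/2)) / (a - a/2), ?_⟩
    rintro _ ⟨z, hz, rfl⟩
    have h1 : (f (a/2) - f a) / (a/2 - a) ≤ (f z - f a) / (z - a) := by
      refine hψ.convexOn.secant_mono (Ioo_subset_Ioc_self ha) ?_ ?_ ?_ ?_ ?_
      · exact ⟨by linarith [ha.1], by linarith [ha.2]⟩
      · exact ⟨lt_trans ha.1 hz.1, hz.2⟩
      · exact ne_of_lt (by linarith [ha.1])
      · exact ne_of_gt hz.1
      · linarith [ha.1, hz.1]
    calc (f a - f (a/2)) / (a - a/2) = (f (a/2) - f a) / (a/2 - a) := by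
          rw [← neg_div_neg_eq]; ring_nf
      _ ≤ (f z - f a) / (z - a) := h1
  exact csInf_le hbdd ⟨y, hy, rfl⟩

lemma IsGenerator.le_rD (hψ : IsGenerator ψ) {a w : ℝ} (ha : a ∈ Ioo (0:ℝ) 1)
    (hw : w ∈ Ioo (0:ℝ) a) :
    ((ψ a).toReal - (ψ w).toReal) / (a - w) ≤ Dplus ψ a := by
  set f : ℝ → ℝ := fun t => (ψ t).toReal with hf
  refine le_csInf ⟨(f 1 - f a)/(1 - a), ⟨1, ⟨ha.2, le_rfl⟩, rfl⟩⟩ ?_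
  rintro _ ⟨z, hz, rfl⟩
  have h1 : (f w - f a) / (w - a) ≤ (f z - f a) / (z - a) := by
    refine hψ.convexOn.secant_mono (Ioo_subset_Ioc_self ha) ?_ ?_ ?_ ?_ ?_
    · exact ⟨hw.1, le_of_lt (lt_trans hw.2 ha.2)⟩
    · exact ⟨lt_trans ha.1 hz.1, hz.2⟩
    · exact ne_of_lt hw.2
    · exact ne_of_gt hz.1
    · linarith [hw.2, hz.1]
  calc (f a - f w) / (a - w) = (f w - f a) / (w - a) := by
        rw [← neg_div_neg_eq]; ring_nf
    _ ≤ (f z - f a) / (z - a) := h1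

lemma IsGenerator.rD_nonpos (hψ : IsGenerator ψ) {a : ℝ} (ha : a ∈ Ioo (0:ℝ) 1) :
    Dplus ψ a ≤ 0 := by
  have := hψ.rD_le ha (⟨ha.2, le_rfl⟩ : (1:ℝ) ∈ Ioc a 1)
  refine this.trans ?_
  have h1 : (ψ 1).toReal = 0 := by rw [hψ.map_one]; simp
  rw [h1]
  apply div_nonpos_of_nonpos_of_nonneg
  · simp [ENNReal.toReal_nonneg]
  · linarith [ha.2]

lemma Dplus_one (ψ : ℝ → ℝ≥0∞) : Dplus ψ 1 = 0 := by
  simp [Dplus, rightD, Set.Ioc_self, Real.sInf_empty]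

lemma IsGenerator.rD_monoOn (hψ : IsGenerator ψ) {a : ℝ} (ha : 0 < a) :
    MonotoneOn (Dplus ψ) (Icc a 1) := by
  intro s hs t ht hst
  rcases eq_or_lt_of_le hst with rfl | h
  · exact le_rfl
  · have hs' : s ∈ Ioo (0:ℝ) 1 := ⟨lt_of_lt_of_le ha hs.1, lt_of_lt_of_le h ht.2⟩
    rcases eq_or_lt_of_le ht.2 with rfl | ht1
    · rw [Dplus_one]; exact hψ.rD_nonpos hs'
    · have ht' : t ∈ Ioo (0:ℝ) 1 := ⟨lt_trans hs'.1 h, ht1⟩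
      calc Dplus ψ s ≤ ((ψ t).toReal - (ψ s).toReal) / (t - s) :=
            hψ.rD_le hs' ⟨h, ht.2⟩
        _ ≤ Dplus ψ t := hψ.le_rD ht' ⟨hs'.1, h⟩

lemma IsGenerator.hasDerivWithinAt_rD (hψ : IsGenerator ψ) {a : ℝ} (ha : a ∈ Ioo (0:ℝ) 1) :
    HasDerivWithinAt (fun t => (ψ t).toReal) (Dplus ψ a) (Ioi a) a := by
  set f : ℝ → ℝ := fun t => (ψ t).toReal with hf
  set sl : ℝ → ℝ := fun y => (f y - f a) / (y - a) with hsl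
  have hsec : ∀ y ∈ Ioc a 1, ∀ z ∈ Ioc a 1, y ≤ z → sl y ≤ sl z := by
    intro y hy z hz hyz
    refine hψ.convexOn.secant_mono (Ioo_subset_Ioc_self ha) ⟨lt_trans ha.1 hy.1, hy.2⟩
      ⟨lt_trans ha.1 hz.1, hz.2⟩ (ne_of_gt hy.1) (ne_of_gt hz.1) hyz
  have hbddIoc : BddBelow (sl '' Set.Ioc a 1) := by
    refine ⟨(f (a/2) - f a) / (a/2 - a), ?_⟩
    rintro _ ⟨z, hz, rfl⟩
    refine hψ.convexOn.secant_mono (Ioo_subset_Ioc_self ha)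
      ⟨by linarith [ha.1], by linarith [ha.2]⟩ ⟨lt_trans ha.1 hz.1, hz.2⟩
      (ne_of_lt (by linarith [ha.1])) (ne_of_gt hz.1) (by linarith [ha.1, hz.1])
  have hbddIoo : BddBelow (sl '' Set.Ioo a 1) :=
    hbddIoc.mono (image_mono (f := sl) Ioo_subset_Ioc_self)
  have hmid : (a+1)/2 ∈ Ioo a 1 := ⟨by linarith [ha.2], by linarith [ha.2]⟩
  have hne : (Set.Ioo a 1).Nonempty := ⟨(a+1)/2, hmid⟩
  have hmono : MonotoneOn sl (Set.Ioo a 1) := fun y hy z hz hyz =>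
    hsec y (Ioo_subset_Ioc_self hy) z (Ioo_subset_Ioc_self hz) hyz
  have htend : Tendsto sl (nhdsWithin a (Set.Ioi a)) (nhds (sInf (sl '' Set.Ioo a 1))) :=
    MonotoneOn.tendsto_nhdsWithin_Ioo_right hne hmono hbddIoo
  have heq : sInf (sl '' Set.Ioo a 1) = Dplus ψ a := by
    have h1 : Dplus ψ a ≤ sInf (sl '' Set.Ioo a 1) :=
      csInf_le_csInf hbddIoc (hne.image _) (image_mono (f := sl) Ioo_subset_Ioc_self)
    have h2 : sInf (sl '' Set.Ioo a 1) ≤ Dplus ψ a := by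
      show sInf (sl '' Set.Ioo a 1) ≤ sInf (sl '' Set.Ioc a 1)
      refine le_csInf ⟨sl 1, 1, ⟨ha.2, le_rfl⟩, rfl⟩ ?_
      rintro _ ⟨y, hy, rfl⟩
      have hz : (a + y)/2 ∈ Ioo a 1 := ⟨by linarith [hy.1], by linarith [hy.1, hy.2]⟩
      calc sInf (sl '' Set.Ioo a 1) ≤ sl ((a+y)/2) := csInf_le hbddIoo ⟨_, hz, rfl⟩
        _ ≤ sl y := hsec _ (Ioo_subset_Ioc_self hz) _ hy (by linarith [hy.1])
    exact le_antisymm h2 h1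
  rw [hasDerivWithinAt_iff_tendsto_slope]
  have hds : Set.Ioi a \ {a} = Set.Ioi a := Set.diff_singleton_eq_self (by simp)
  rw [hds, ← heq]
  refine htend.congr' ?_
  filter_upwards [self_mem_nhdsWithin] with y hy
  rw [slope_def_field]

lemma IsGenerator.continuousOn_Icc (hψ : IsGenerator ψ) {x : ℝ} (hx : x ∈ Ioc (0:ℝ) 1) :
    ContinuousOn (fun t => (ψ t).toReal) (Icc x 1) := by
  set f : ℝ → ℝ := fun t => (ψ t).toReal with hfdef
  intro t ht
  rcases eq_or_lt_of_le ht.2 with rfl | ht1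
  · have hf1 : f 1 = 0 := by simp [hfdef, hψ.map_one]
    have hfhalf : (ψ (1/2 : ℝ)).toReal = 1 := by rw [hψ.normalized]; simp
    have hbound : ∀ w ∈ Icc (1/2 : ℝ) 1, f w ≤ 2 * (1 - w) := by
      intro w hw
      rcases eq_or_lt_of_le hw.2 with rfl | hw1
      · simp [hf1]
      · have hsec := hψ.convexOn.secant_mono (a := 1) (x := 1/2) (y := w)
          ⟨one_pos, le_rfl⟩ ⟨by norm_num, by norm_num⟩ ⟨by linarith [hw.1], hw.2⟩
          (by norm_num) (ne_of_lt hw1) hw.1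
        rw [hψ.map_one] at hsec
        rw [hfhalf] at hsec
        norm_num at hsec
        rw [le_div_iff_of_neg (by linarith : w - (1:ℝ) < 0)] at hsec
        show (ψ w).toReal ≤ 2 * (1 - w)
        linarith [hsec]
    have htends : Tendsto f (nhdsWithin 1 (Icc x 1)) (nhds 0) := by
      apply squeeze_zero'
      · exact Filter.Eventually.of_forall (fun w => ENNReal.toReal_nonneg)
      · have hev : ∀ᶠ w in nhdsWithin 1 (Icc x 1), (1/2 : ℝ) ≤ w := by
          refine Filter.Eventually.filter_mono nhdsWithin_le_nhds ?_
          exact eventually_ge_nhds (by norm_num)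
        filter_upwards [hev, self_mem_nhdsWithin] with w hw hw'
        exact hbound w ⟨hw, hw'.2⟩
      · have hc : Continuous (fun w : ℝ => 2 * (1 - w)) := by continuity
        have : Tendsto (fun w : ℝ => 2 * (1 - w)) (nhds 1) (nhds 0) := by
          simpa using hc.tendsto 1
        exact this.mono_left nhdsWithin_le_nhds
    rw [← hf1] at htends
    exact htends
  · have htI : t ∈ Ioo (0:ℝ) 1 := ⟨lt_of_lt_of_le hx.1 ht.1, ht1⟩
    have hco := hψ.convexOn.continuousOn_interior
    rw [interior_Ioc] at hco
    exact ((hco t htI).continuousAt (isOpen_Ioo.mem_nhds htI)).continuousWithinAt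

lemma IsGenerator.ftc (hψ : IsGenerator ψ) {x : ℝ} (hx : x ∈ Ioc (0:ℝ) 1) :
    ∫ t in Ioc x 1, Dplus ψ t = - (ψ x).toReal := by
  have hint : IntervalIntegrable (Dplus ψ) MeasureTheory.volume x 1 := by
    apply MonotoneOn.intervalIntegrable
    rw [uIcc_of_le hx.2]
    exact hψ.rD_monoOn hx.1
  have key := intervalIntegral.integral_eq_sub_of_hasDeriv_right_of_le hx.2
    (hψ.continuousOn_Icc hx)
    (fun t ht => hψ.hasDerivWithinAt_rD ⟨lt_trans hx.1 ht.1, ht.2⟩) hint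
  rw [intervalIntegral.integral_of_le hx.2] at key
  rw [key, hψ.map_one]
  simp

lemma IsGenerator.countable_discont (hψ : IsGenerator ψ) {a : ℝ} (ha : a ∈ Ioo (0:ℝ) 1) :
    Set.Countable {t ∈ Ioo a 1 | ¬ ContinuousAt (Dplus ψ) t} := by
  set G : ℝ → ℝ := fun t => Dplus ψ (max a (min t 1)) with hG
  have hmem : ∀ t : ℝ, max a (min t 1) ∈ Icc a 1 :=
    fun t => ⟨le_max_left _ _, max_le ha.2.le (min_le_right _ _)⟩
  have hmonoG : Monotone G := by
    intro s t hst
    exact hψ.rD_monoOn ha.1 (hmem s) (hmem t)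
      (max_le_max le_rfl (min_le_min hst le_rfl))
  refine (hmonoG.countable_not_continuousAt).mono ?_
  rintro t ⟨htI, htD⟩
  intro hGc
  apply htD
  refine hGc.congr ?_
  have : Ioo a 1 ∈ nhds t := isOpen_Ioo.mem_nhds htI
  filter_upwards [this] with s hs
  rw [hG]
  simp only []
  rw [min_eq_left hs.2.le, max_eq_right hs.1.le]

end AuxStmt3

/-- If the right-hand derivatives `D⁺φ_n` converge to `D⁺φ` at all
continuity points of `D⁺φ`, then the generators `φ_n` converge to `φ` on `(0,1]`. -/
theorem stmt3 (φ : ℝ → ℝ≥0∞) (φseq : ℕ → ℝ → ℝ≥0∞)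
    (hφ : IsGenerator φ) (hφseq : ∀ n, IsGenerator (φseq n))
    (h : ∀ x ∈ ContD φ,
      Filter.Tendsto (fun n => Dplus (φseq n) x) Filter.atTop (nhds (Dplus φ x))) :
    ∀ x ∈ Set.Ioc (0:ℝ) 1,
      Filter.Tendsto (fun n => φseq n x) Filter.atTop (nhds (φ x)) := by
  intro x hx
  have hx0 : (0:ℝ) < x := hx.1
  have hx1 : x ≤ 1 := hx.2
  have hx' : x/2 ∈ Ioo (0:ℝ) 1 := ⟨by positivity, by linarith⟩
  set bad := {t ∈ Ioo (x/2) 1 | ¬ ContinuousAt (Dplus φ) t} with hbad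
  have hcnt : bad.Countable := hφ.countable_discont hx'
  have hbadnull : MeasureTheory.volume bad = 0 := hcnt.measure_zero _
  -- pick a continuity point u < x
  obtain ⟨u, huI, huB⟩ : ∃ u, u ∈ Ioo (x/2) x ∧ u ∉ bad := by
    by_contra hcon
    push_neg at hcon
    have hsub : Ioo (x/2) x ⊆ bad := fun u hu => hcon u hu
    have hle := measure_mono (μ := MeasureTheory.volume) hsub
    rw [hbadnull, Real.volume_Ioo] at hle
    simp only [nonpos_iff_eq_zero, ENNReal.ofReal_eq_zero] at hle
    linarith
  have huC : u ∈ ContD φ := by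
    refine ⟨⟨lt_trans hx'.1 huI.1, lt_of_lt_of_le huI.2 hx1⟩, ?_⟩
    by_contra hc
    exact huB ⟨⟨huI.1, lt_of_lt_of_le huI.2 hx1⟩, hc⟩
  have hu_tend := h u huC
  set M : ℝ := |Dplus φ u| + 1 with hM
  set μ := MeasureTheory.volume.restrict (Ioc x 1) with hμ
  -- nonpositivity helper
  have hnonpos : ∀ (ρ : ℝ → ℝ≥0∞), IsGenerator ρ → ∀ t ∈ Ioc x 1, Dplus ρ t ≤ 0 := by
    intro ρ hρ t ht
    rcases eq_or_lt_of_le ht.2 with rfl | ht1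
    · rw [Dplus_one]
    · exact hρ.rD_nonpos ⟨lt_trans hx0 ht.1, ht1⟩
  -- measurability
  have hmeas : ∀ n, MeasureTheory.AEStronglyMeasurable (Dplus (φseq n)) μ := by
    intro n
    have hmem : ∀ t : ℝ, max (x/2) (min t 1) ∈ Icc (x/2) 1 :=
      fun t => ⟨le_max_left _ _, max_le hx'.2.le (min_le_right _ _)⟩
    have hmono : Monotone (fun t => Dplus (φseq n) (max (x/2) (min t 1))) := by
      intro s t hst
      exact (hφseq n).rD_monoOn hx'.1 (hmem s) (hmem t)
        (max_le_max le_rfl (min_le_min hst le_rfl))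
    refine (hmono.measurable.aestronglyMeasurable).congr ?_
    filter_upwards [MeasureTheory.ae_restrict_mem measurableSet_Ioc] with t ht
    rw [min_eq_left ht.2, max_eq_right (by linarith [ht.1] : x/2 ≤ t)]
  -- bound
  have hbnd : ∀ᶠ n in atTop, ∀ᵐ t ∂μ, ‖Dplus (φseq n) t‖ ≤ M := by
    have hev : ∀ᶠ n in atTop, Dplus φ u - 1 < Dplus (φseq n) u :=
      hu_tend.eventually (eventually_gt_nhds (by linarith))
    filter_upwards [hev] with n hn
    filter_upwards [MeasureTheory.ae_restrict_mem measurableSet_Ioc] with t ht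
    have hu1 : u ≤ 1 := by linarith [huI.2]
    have hut : u ≤ t := by linarith [huI.2, ht.1]
    have h1 : Dplus (φseq n) u ≤ Dplus (φseq n) t :=
      (hφseq n).rD_monoOn (lt_trans hx'.1 huI.1) ⟨le_rfl, hu1⟩ ⟨hut, ht.2⟩ hut
    have h2 : Dplus (φseq n) t ≤ 0 := hnonpos _ (hφseq n) t ht
    rw [Real.norm_eq_abs, abs_le]
    constructor
    · linarith [neg_abs_le (Dplus φ u), hn, h1]
    · linarith [h2, abs_nonneg (Dplus φ u)]
  -- bound integrable
  have hbint : MeasureTheory.Integrable (fun _ => M) μ := by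
    rw [hμ]
    refine MeasureTheory.integrableOn_const (ne_of_lt ?_)
    exact measure_Ioc_lt_top
  -- a.e. pointwise convergence
  have hlim : ∀ᵐ t ∂μ, Tendsto (fun n => Dplus (φseq n) t) atTop (nhds (Dplus φ t)) := by
    have hnull : MeasureTheory.volume ({1} ∪ bad : Set ℝ) = 0 :=
      MeasureTheory.measure_union_null (MeasureTheory.measure_singleton 1) hbadnull
    have hae : ∀ᵐ t ∂MeasureTheory.volume, t ∉ ({1} ∪ bad : Set ℝ) :=
      MeasureTheory.measure_eq_zero_iff_ae_notMem.1 hnull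
    filter_upwards [MeasureTheory.ae_restrict_mem measurableSet_Ioc,
      MeasureTheory.ae_restrict_of_ae hae] with t ht htb
    simp only [Set.mem_union, Set.mem_singleton_iff, not_or] at htb
    have ht1 : t < 1 := lt_of_le_of_ne ht.2 htb.1
    have htI : t ∈ Ioo (x/2) 1 := ⟨by linarith [ht.1], ht1⟩
    have htc : ContinuousAt (Dplus φ) t := by
      by_contra hc
      exact htb.2 ⟨htI, hc⟩
    exact h t ⟨⟨lt_trans hx0 ht.1, ht1⟩, htc⟩
  -- dominated convergence
  have hDCT : Tendsto (fun n => ∫ t, Dplus (φseq n) t ∂μ) atTop (nhds (∫ t, Dplus φ t ∂μ)) :=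
    MeasureTheory.tendsto_integral_filter_of_dominated_convergence (fun _ => M)
      (Filter.Eventually.of_forall hmeas) hbnd hbint hlim
  -- apply FTC
  have hftcn : ∀ n, ∫ t, Dplus (φseq n) t ∂μ = - ((φseq n) x).toReal :=
    fun n => (hφseq n).ftc hx
  have hftc : ∫ t, Dplus φ t ∂μ = - (φ x).toReal := hφ.ftc hx
  rw [hftc] at hDCT
  simp only [hftcn] at hDCT
  have htoReal : Tendsto (fun n => ((φseq n) x).toReal) atTop (nhds ((φ x).toReal)) := by
    have := hDCT.neg
    simpa using this
  have hofReal : Tendsto (fun n => ENNReal.ofReal (((φseq n) x).toReal)) atTop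
      (nhds (ENNReal.ofReal ((φ x).toReal))) :=
    (ENNReal.continuous_ofReal.tendsto _).comp htoReal
  rw [ENNReal.ofReal_toReal (hφ.finite x hx).ne] at hofReal
  refine hofReal.congr fun n => ?_
  rw [ENNReal.ofReal_toReal ((hφseq n).finite x hx).ne]
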